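/- Let A : ℝ≥0 → ℝ^{n×n} be continuous and bounded with sup-norm bound ρ := sup_t ‖A(t)‖ < ∞, and let Aav ∈ ℝ^{n×n}. Let Φ(t+T, t) denote the state transition matrix of the system x' = ε A(t) x and Φav(t+T,t) = exp(ε T Aav). Then ‖Φ(t+T,t) - Φav(t+T,t)‖ ≤ ε ‖∫_t^{t+T} (A(s) - Aav) ds‖ + (e^{ρεT} - 1 - ρεT) + (e^{εT‖Aav‖} - 1 - εT‖Aav‖) for all t, T ≥ 0 and ε ≥ 0. -/

import Mathlib

open Matrix NormedSpace
open scoped Matrix.Norms.L2Operator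

lemma matrix_norm_one_le {n : ℕ} : ‖(1 : Matrix (Fin n) (Fin n) ℝ)‖ ≤ 1 := by
  rw [Matrix.cstar_norm_def, _root_.map_one]
  exact ContinuousLinearMap.norm_id_le

lemma key {n : ℕ} (B : ℝ → Matrix (Fin n) (Fin n) ℝ) (hB : Continuous B)
    (c : ℝ) (hc : ∀ s, ‖B s‖ ≤ c) (ε : ℝ) (hε : 0 ≤ ε)
    (Y : ℝ → Matrix (Fin n) (Fin n) ℝ) (t T : ℝ) (hT : 0 ≤ T)
    (hY1 : Y t = 1)
    (hY' : ∀ u, HasDerivAt Y (ε • (B u * Y u)) u) :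
    ‖Y (t + T) - 1 - ε • ∫ s in t..(t + T), B s‖ ≤
      Real.exp (c * ε * T) - 1 - c * ε * T := by
  have hc0 : 0 ≤ c := le_trans (norm_nonneg _) (hc t)
  have hcε : 0 ≤ c * ε := mul_nonneg hc0 hε
  have hYcont : Continuous Y :=
    continuous_iff_continuousAt.2 fun u => (hY' u).continuousAt
  have htT : t ≤ t + T := le_add_of_nonneg_right hT
  -- Gronwall bound on ‖Y u - 1‖
  have hgron : ∀ u ∈ Set.Icc t (t + T), ‖Y u - 1‖ ≤ Real.exp (c * ε * (u - t)) - 1 := by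
    intro u hu
    have h := norm_le_gronwallBound_of_norm_deriv_right_le (f := fun u => Y u - 1)
      (f' := fun u => ε • (B u * Y u)) (δ := 0) (K := c * ε) (ε := c * ε)
      (a := t) (b := t + T)
      ((hYcont.sub continuous_const).continuousOn)
      (fun x _ => ((hY' x).sub_const 1).hasDerivWithinAt)
      (by simp [hY1])
      (fun x _ => by
        have h1 : ‖ε • (B x * Y x)‖ = ε * ‖B x * Y x‖ := by
          rw [norm_smul, Real.norm_eq_abs, abs_of_nonneg hε]
        have h2 : ‖B x * Y x‖ ≤ c * ‖Y x‖ :=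
          le_trans (norm_mul_le _ _) (mul_le_mul_of_nonneg_right (hc x) (norm_nonneg _))
        have h3 : ‖Y x‖ ≤ ‖Y x - 1‖ + 1 := by
          calc ‖Y x‖ = ‖Y x - 1 + 1‖ := by rw [sub_add_cancel]
            _ ≤ ‖Y x - 1‖ + ‖(1 : Matrix (Fin n) (Fin n) ℝ)‖ := norm_add_le _ _
            _ ≤ ‖Y x - 1‖ + 1 := by linarith [matrix_norm_one_le (n := n)]
        calc ‖ε • (B x * Y x)‖ ≤ ε * (c * ‖Y x‖) := by
              rw [h1]; exact mul_le_mul_of_nonneg_left h2 hε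
          _ ≤ ε * (c * (‖Y x - 1‖ + 1)) := by
              exact mul_le_mul_of_nonneg_left
                (mul_le_mul_of_nonneg_left h3 hc0) hε
          _ = c * ε * ‖Y x - 1‖ + c * ε := by ring)
      u hu
    refine h.trans ?_
    by_cases hK : c * ε = 0
    · simp [gronwallBound, hK]
    · rw [gronwallBound_of_K_ne_0 hK]
      simp only [zero_mul, zero_add]
      rw [div_mul_eq_mul_div, mul_comm, mul_div_assoc, div_self hK, mul_one]
  -- FTC identity
  have hint1 : IntervalIntegrable (fun s => ε • (B s * Y s)) MeasureTheory.volume t (t + T) :=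
    ((hB.mul hYcont).const_smul ε).intervalIntegrable t (t + T)
  have hftc : ∫ s in t..(t + T), ε • (B s * Y s) = Y (t + T) - Y t :=
    intervalIntegral.integral_eq_sub_of_hasDerivAt (fun s _ => hY' s) hint1
  have hintB : IntervalIntegrable (fun s => ε • B s) MeasureTheory.volume t (t + T) :=
    (hB.const_smul ε).intervalIntegrable t (t + T)
  have hid : Y (t + T) - 1 - ε • ∫ s in t..(t + T), B s
      = ∫ s in t..(t + T), ε • (B s * (Y s - 1)) := by
    have heq : (fun s => ε • (B s * (Y s - 1))) =
        fun s => ε • (B s * Y s) - ε • B s := by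
      funext s; rw [mul_sub, mul_one, smul_sub]
    rw [heq, intervalIntegral.integral_sub hint1 hintB,
      hftc, hY1, intervalIntegral.integral_smul]
  rw [hid]
  -- bound the integral
  have hgcont : Continuous (fun s => c * ε * (Real.exp (c * ε * (s - t)) - 1)) := by
    apply continuous_const.mul
    exact (Real.continuous_exp.comp (continuous_const.mul (continuous_id.sub continuous_const))).sub
      continuous_const
  have hbnd : ‖∫ s in t..(t + T), ε • (B s * (Y s - 1))‖ ≤
      |∫ s in t..(t + T), c * ε * (Real.exp (c * ε * (s - t)) - 1)| := by
    apply intervalIntegral.norm_integral_le_abs_of_norm_le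
    · filter_upwards [MeasureTheory.ae_restrict_mem measurableSet_uIoc] with s hs
      have hs' : s ∈ Set.Icc t (t + T) := by
        rw [Set.uIoc_of_le htT] at hs
        exact Set.mem_Icc_of_Ioc hs
      have h1 : ‖ε • (B s * (Y s - 1))‖ ≤ ε * (c * ‖Y s - 1‖) := by
        rw [norm_smul, Real.norm_eq_abs, abs_of_nonneg hε]
        exact mul_le_mul_of_nonneg_left
          (le_trans (norm_mul_le _ _) (mul_le_mul_of_nonneg_right (hc s) (norm_nonneg _))) hε
      refine h1.trans ?_
      calc ε * (c * ‖Y s - 1‖) ≤ ε * (c * (Real.exp (c * ε * (s - t)) - 1)) :=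
            mul_le_mul_of_nonneg_left
              (mul_le_mul_of_nonneg_left (hgron s hs') hc0) hε
        _ = c * ε * (Real.exp (c * ε * (s - t)) - 1) := by ring
    · exact hgcont.intervalIntegrable t (t + T)
  refine hbnd.trans ?_
  have hF : ∀ s ∈ Set.uIcc t (t + T),
      HasDerivAt (fun s => Real.exp (c * ε * (s - t)) - c * ε * s)
        (c * ε * (Real.exp (c * ε * (s - t)) - 1)) s := by
    intro s _
    have h1 : HasDerivAt (fun s : ℝ => Real.exp (c * ε * (s - t)))
        (Real.exp (c * ε * (s - t)) * (c * ε)) s := by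
      simpa using (((hasDerivAt_id s).sub_const t).const_mul (c * ε)).exp
    have h2 : HasDerivAt (fun s : ℝ => c * ε * s) (c * ε) s := by
      simpa using (hasDerivAt_id s).const_mul (c * ε)
    refine (h1.sub h2).congr_deriv ?_
    ring
  have hval : ∫ s in t..(t + T), c * ε * (Real.exp (c * ε * (s - t)) - 1)
      = Real.exp (c * ε * T) - 1 - c * ε * T := by
    rw [intervalIntegral.integral_eq_sub_of_hasDerivAt hF
      (hgcont.intervalIntegrable t (t + T))]
    simp only [add_sub_cancel_left, sub_self, mul_zero, Real.exp_zero]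
    ring
  rw [hval, abs_of_nonneg]
  linarith [Real.add_one_le_exp (c * ε * T)]

theorem stmt_4 {n : ℕ}
    (A : ℝ → Matrix (Fin n) (Fin n) ℝ) (Aav : Matrix (Fin n) (Fin n) ℝ)
    (ρ : ℝ) (hA : Continuous A) (hbound : ∀ t, ‖A t‖ ≤ ρ)
    (ε : ℝ) (hε : 0 ≤ ε)
    (Φ : ℝ → ℝ → Matrix (Fin n) (Fin n) ℝ)
    (hΦinit : ∀ t0, Φ t0 t0 = 1)
    (hΦode : ∀ t0 τ, HasDerivAt (fun u => Φ u t0) (ε • (A τ * Φ τ t0)) τ) :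
    ∀ t T : ℝ, 0 ≤ t → 0 ≤ T →
      ‖Φ (t + T) t - exp ((ε * T) • Aav)‖ ≤
        ε * ‖∫ s in t..(t + T), (A s - Aav)‖ +
          (Real.exp (ρ * ε * T) - 1 - ρ * ε * T) +
          (Real.exp (ε * T * ‖Aav‖) - 1 - ε * T * ‖Aav‖) := by
  intro t T ht hT
  have e1 := key A hA ρ hbound ε hε (fun u => Φ u t) t T hT (hΦinit t) (hΦode t)
  set Y : ℝ → Matrix (Fin n) (Fin n) ℝ := fun u => exp ((ε * (u - t)) • Aav) with hY
  have hY1 : Y t = 1 := by simp [hY, exp_zero]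
  have hY' : ∀ u, HasDerivAt Y (ε • ((fun _ : ℝ => Aav) u * Y u)) u := by
    intro u
    have hg : HasDerivAt (fun u : ℝ => ε * (u - t)) ε u := by
      simpa using ((hasDerivAt_id u).sub_const t).const_mul ε
    have hf := hasDerivAt_exp_smul_const' (𝕂 := ℝ) Aav (ε * (u - t))
    exact HasDerivAt.scomp u hf hg
  have e2 := key (fun _ => Aav) continuous_const ‖Aav‖ (fun _ => le_refl _) ε hε
    Y t T hT hY1 hY'
  have hYT : Y (t + T) = exp ((ε * T) • Aav) := by
    simp [hY, add_sub_cancel_left]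
  have hintA : IntervalIntegrable A MeasureTheory.volume t (t + T) :=
    hA.intervalIntegrable t (t + T)
  have hintC : IntervalIntegrable (fun _ : ℝ => Aav) MeasureTheory.volume t (t + T) :=
    continuous_const.intervalIntegrable t (t + T)
  have hsplit : (∫ s in t..(t + T), (A s - Aav))
      = (∫ s in t..(t + T), A s) - ∫ s in t..(t + T), (fun _ => Aav) s :=
    intervalIntegral.integral_sub hintA hintC
  set D1 := Φ (t + T) t - 1 - ε • ∫ s in t..(t + T), A s with hD1
  set D2 := Y (t + T) - 1 - ε • ∫ s in t..(t + T), (fun _ => Aav) s with hD2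
  have hdecomp : Φ (t + T) t - exp ((ε * T) • Aav)
      = D1 - D2 + ε • ∫ s in t..(t + T), (A s - Aav) := by
    rw [hD1, hD2, hYT, hsplit, smul_sub]
    abel
  rw [hdecomp]
  have htri : ‖D1 - D2 + ε • ∫ s in t..(t + T), (A s - Aav)‖
      ≤ ‖D1‖ + ‖D2‖ + ‖ε • ∫ s in t..(t + T), (A s - Aav)‖ :=
    (norm_add_le _ _).trans (add_le_add_left (norm_sub_le _ _) _)
  have hns : ‖ε • ∫ s in t..(t + T), (A s - Aav)‖
      = ε * ‖∫ s in t..(t + T), (A s - Aav)‖ := by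
    rw [norm_smul, Real.norm_eq_abs, abs_of_nonneg hε]
  have hcomm : ‖Aav‖ * ε * T = ε * T * ‖Aav‖ := by ring
  rw [hcomm] at e2
  rw [hns] at htri
  refine htri.trans ?_
  have := e1
  linarith [e1, e2]
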